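/- Let n ≥ 1 and let k_1, …, k_n ≥ 1 be integers. If t > 0 is a solution of the equation n − 1 − t = Σ_{l=1}^n 1/(1 + t + ⋯ + t^{k_l}), then t^{-1} is also a solution of the same equation, i.e. n − 1 − t^{-1} = Σ_{l=1}^n 1/(1 + t^{-1} + ⋯ + t^{-k_l}). -/

import Mathlib

/-- If `t > 0` is a solution of `n − 1 − t = Σ_{l=1}^n 1/(1 + t + ⋯ + t^{k_l})`,
then so is `t⁻¹`. -/
theorem stmt_3 (n : ℕ) (hn : 1 ≤ n) (k : Fin n → ℕ) (hk : ∀ l, 1 ≤ k l)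
    (t : ℝ) (ht : 0 < t)
    (heq : (n : ℝ) - 1 - t = ∑ l : Fin n, 1 / ∑ i ∈ Finset.range (k l + 1), t ^ i) :
    (n : ℝ) - 1 - t⁻¹ = ∑ l : Fin n, 1 / ∑ i ∈ Finset.range (k l + 1), (t⁻¹) ^ i := by
  have ht0 : t ≠ 0 := ne_of_gt ht
  have key : ∀ l : Fin n, 1 / ∑ i ∈ Finset.range (k l + 1), (t⁻¹) ^ i
      = (1 - t⁻¹) + t⁻¹ * (1 / ∑ i ∈ Finset.range (k l + 1), t ^ i) := by
    intro l
    set m := k l with hm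
    have hS : 0 < ∑ i ∈ Finset.range (m + 1), t ^ i :=
      Finset.sum_pos (fun i _ => pow_pos ht i) ⟨0, by simp⟩
    have hinv : ∑ i ∈ Finset.range (m + 1), (t⁻¹) ^ i
        = (∑ i ∈ Finset.range (m + 1), t ^ i) / t ^ m := by
      rw [eq_div_iff (by positivity), Finset.sum_mul]
      rw [← Finset.sum_range_reflect (fun i => t ^ i) (m + 1)]
      refine Finset.sum_congr rfl fun i hi => ?_
      have hi' : i ≤ m := Nat.lt_succ_iff.mp (Finset.mem_range.mp hi)
      have hmi : m + 1 - 1 - i = m - i := by omega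
      rw [hmi, inv_pow, inv_mul_eq_div, eq_comm, eq_div_iff (by positivity), ← pow_add]
      congr 1
      omega
    have hgeom : (∑ i ∈ Finset.range (m + 1), t ^ i) * (t - 1) = t ^ (m + 1) - 1 :=
      geom_sum_mul t (m + 1)
    rw [hinv]
    rw [one_div_div]
    field_simp
    linear_combination (-1 : ℝ) * hgeom
  rw [Finset.sum_congr rfl fun l _ => key l, Finset.sum_add_distrib,
    Finset.sum_const, ← Finset.mul_sum, ← heq]
  simp only [Finset.card_univ, Fintype.card_fin, nsmul_eq_mul]
  field_simp
  ring
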